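/- Let k be a field, R = k[x_1, …, x_n], and I = (f_1, …, f_n) an ideal where each f_j has the form f_j = x_j^{d_j} + h_j with deg(h_j) < d_j (total degree). Then the quotient ring R/I is a finite-dimensional k-vector space of dimension exactly d_1 · d_2 ⋯ d_n. -/

import Mathlib

open MvPolynomial
open scoped BigOperators

set_option synthInstance.maxHeartbeats 1000000
set_option maxHeartbeats 1000000

namespace QFLPAux

variable {k : Type} [Field k] {n : ℕ}

lemma degree_eq_sum (m : Fin n →₀ ℕ) : m.degree = ∑ i, m i := by
  rw [Finsupp.degree]
  exact Finset.sum_subset (Finset.subset_univ _) (by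
    intro i _ hi
    simpa using Finsupp.notMem_support_iff.mp hi)

lemma degree_add (a b : Fin n →₀ ℕ) : (a + b).degree = a.degree + b.degree := by
  simp [degree_eq_sum, Finset.sum_add_distrib]

lemma degree_single (j : Fin n) (e : ℕ) : (Finsupp.single j e).degree = e := by
  rw [degree_eq_sum]
  simp [Finsupp.single_apply]

lemma degree_tsub {a m : Fin n →₀ ℕ} (hle : a ≤ m) : (m - a).degree = m.degree - a.degree := by
  have h1 : (m - a) + a = m := tsub_add_cancel_of_le hle
  have h2 : (m - a).degree + a.degree = m.degree := by rw [← degree_add, h1]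
  omega

lemma totalDegree_le_of_support (p : MvPolynomial (Fin n) k) (N : ℕ)
    (H : ∀ m ∈ p.support, m.degree ≤ N) : p.totalDegree ≤ N :=
  Finset.sup_le H

lemma degree_le_totalDegree {p : MvPolynomial (Fin n) k} {m : Fin n →₀ ℕ}
    (hm : m ∈ p.support) : m.degree ≤ p.totalDegree :=
  le_totalDegree hm

lemma totalDegree_hc_le (N : ℕ) (p : MvPolynomial (Fin n) k) :
    (homogeneousComponent N p).totalDegree ≤ N := by
  apply totalDegree_le_of_support
  intro m hm
  rw [mem_support_iff, coeff_homogeneousComponent] at hm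
  by_cases hd : m.degree = N
  · omega
  · simp [hd] at hm

lemma hc_hc (N : ℕ) (p : MvPolynomial (Fin n) k) :
    homogeneousComponent N (homogeneousComponent N p) = homogeneousComponent N p := by
  apply MvPolynomial.ext
  intro m
  simp only [coeff_homogeneousComponent]
  split_ifs <;> rfl

lemma hc_mul_pow (N e : ℕ) (i : Fin n) (p : MvPolynomial (Fin n) k) :
    homogeneousComponent N (p * X i ^ e) =
      if e ≤ N then homogeneousComponent (N - e) p * X i ^ e else 0 := by
  classical
  apply MvPolynomial.ext
  intro m
  rw [apply_ite (coeff m), coeff_zero]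
  by_cases hm : Finsupp.single i e ≤ m
  · have he : e ≤ m i := Finsupp.single_le_iff.mp hm
    have hdeg : (m - Finsupp.single i e).degree = m.degree - e := by
      rw [degree_tsub hm, degree_single]
    have he2 : e ≤ m.degree := le_trans he (Finsupp.le_degree i m)
    simp only [coeff_homogeneousComponent, X_pow_eq_monomial, coeff_mul_monomial', hm, if_true,
      mul_one, hdeg]
    split_ifs with h1 h2 h3 h2 <;> first | rfl | omega
  · simp only [coeff_homogeneousComponent, X_pow_eq_monomial, coeff_mul_monomial', hm, if_false]
    split_ifs <;> rfl

lemma sub_top_component (N : ℕ) (p : MvPolynomial (Fin n) k) (hp : p.totalDegree ≤ N) :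
    p - homogeneousComponent N p = 0 ∨ (p - homogeneousComponent N p).totalDegree + 1 ≤ N := by
  classical
  have hsupp : ∀ m ∈ (p - homogeneousComponent N p).support, m.degree + 1 ≤ N := by
    intro m hm
    rw [mem_support_iff, coeff_sub, coeff_homogeneousComponent] at hm
    by_cases hd : m.degree = N
    · simp [hd] at hm
    · have hc : coeff m p ≠ 0 := by
        intro h0; apply hm; simp [hd, h0]
      have := degree_le_totalDegree (mem_support_iff.mpr hc)
      omega
  rcases eq_or_ne (p - homogeneousComponent N p) 0 with h0 | h0
  · exact Or.inl h0
  · right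
    obtain ⟨m, hm⟩ := Finset.nonempty_iff_ne_empty.mpr (fun he => h0 (support_eq_empty.mp he))
    have hN : 1 ≤ N := by have := hsupp m hm; omega
    have := totalDegree_le_of_support (p - homogeneousComponent N p) (N - 1)
      (fun m hm => by have := hsupp m hm; omega)
    omega


variable {k : Type} [Field k] {n : ℕ}

lemma split_lemma (l : Fin n) (e : ℕ) (p : MvPolynomial (Fin n) k) :
    ∃ low q : MvPolynomial (Fin n) k, p = low + X l ^ e * q ∧
      (∀ m : Fin n →₀ ℕ, e ≤ m l → coeff m low = 0) ∧ (p = 0 → low = 0 ∧ q = 0) := by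
  classical
  refine ⟨∑ m ∈ p.support.filter (fun m => m l < e), monomial m (coeff m p),
    ∑ m ∈ p.support.filter (fun m => ¬ m l < e), monomial (m - Finsupp.single l e) (coeff m p),
    ?_, ?_, ?_⟩
  · have hmul : (X l ^ e : MvPolynomial (Fin n) k) *
        ∑ m ∈ p.support.filter (fun m => ¬ m l < e), monomial (m - Finsupp.single l e) (coeff m p)
        = ∑ m ∈ p.support.filter (fun m => ¬ m l < e), monomial m (coeff m p) := by
      rw [Finset.mul_sum]
      apply Finset.sum_congr rfl
      intro m hm
      rw [Finset.mem_filter] at hm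
      have hle : Finsupp.single l e ≤ m := Finsupp.single_le_iff.mpr (by omega)
      rw [X_pow_eq_monomial, monomial_mul, one_mul, add_tsub_cancel_of_le hle]
    rw [hmul, Finset.sum_filter_add_sum_filter_not p.support (fun m => m l < e)
      (fun m => monomial m (coeff m p)), support_sum_monomial_coeff]
  · intro m hm
    rw [coeff_sum]
    apply Finset.sum_eq_zero
    intro m' hm'
    rw [Finset.mem_filter] at hm'
    rw [coeff_monomial, if_neg]
    intro h0
    rw [h0] at hm'
    omega
  · intro h0
    subst h0
    simp

lemma regular_step (t : Finset (Fin n)) (l : Fin n) (hl : l ∉ t) (e : ℕ) (dd : Fin n → ℕ)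
    (p : MvPolynomial (Fin n) k) (u : Fin n → MvPolynomial (Fin n) k)
    (hu : ∀ j, j ∉ t → u j = 0)
    (heq : p * X l ^ e = ∑ j, u j * X j ^ dd j) :
    ∃ w : Fin n → MvPolynomial (Fin n) k, (∀ j, j ∉ t → w j = 0) ∧
      p = ∑ j, w j * X j ^ dd j := by
  classical
  choose low q hsplit hlow hzero using fun j => split_lemma l e (u j)
  refine ⟨q, fun j hj => ((hzero j) (hu j hj)).2, ?_⟩
  have key : (p - ∑ j, q j * X j ^ dd j) * X l ^ e = ∑ j, low j * X j ^ dd j := by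
    rw [sub_mul, heq, Finset.sum_mul, ← Finset.sum_sub_distrib]
    apply Finset.sum_congr rfl
    intro j _
    rw [hsplit j]
    ring
  have hP : ∀ m : Fin n →₀ ℕ, coeff m (p - ∑ j, q j * X j ^ dd j) = 0 := by
    intro m
    have h1 : coeff (m + Finsupp.single l e) ((p - ∑ j, q j * X j ^ dd j) * X l ^ e)
        = coeff m (p - ∑ j, q j * X j ^ dd j) := by
      rw [X_pow_eq_monomial, coeff_mul_monomial, mul_one]
    rw [← h1, key, coeff_sum]
    apply Finset.sum_eq_zero
    intro j _
    rw [X_pow_eq_monomial, coeff_mul_monomial']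
    by_cases hj : j = l
    · subst hj
      have : low j = 0 := ((hzero j) (hu j hl)).1
      simp [this]
    · split_ifs with hle
      · rw [hlow j _ ?_, zero_mul]
        simp only [Finsupp.tsub_apply, Finsupp.add_apply, Finsupp.single_apply, if_neg hj]
        simp
      · rfl
  have : p - ∑ j, q j * X j ^ dd j = 0 := MvPolynomial.ext _ _ (by simpa using hP)
  have := sub_eq_zero.mp this
  exact this


variable {k : Type} [Field k] {n : ℕ}

lemma koszul (dd : Fin n → ℕ) (s : Finset (Fin n)) :
    ∀ b : Fin n → MvPolynomial (Fin n) k, (∀ j, j ∉ s → b j = 0) →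
    (∑ j, b j * X j ^ dd j = 0) →
    ∃ c : Fin n → Fin n → MvPolynomial (Fin n) k, (∀ i, c i i = 0) ∧
      (∀ i j, c i j = - c j i) ∧ (∀ i j, j ∉ s → c i j = 0) ∧
      (∀ j, b j = ∑ i, c j i * X i ^ dd i) := by
  classical
  induction s using Finset.induction_on with
  | empty =>
    intro b hb _
    refine ⟨0, by simp, by simp, by simp, fun j => ?_⟩
    rw [hb j (by simp)]
    simp
  | @insert l t hl ih =>
    intro b hb hsum
    -- express b l * X l ^ dd l in terms of the others
    set u : Fin n → MvPolynomial (Fin n) k := fun j => if j = l then 0 else - b j with hu_def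
    have hu : ∀ j, j ∉ t → u j = 0 := by
      intro j hj
      by_cases hjl : j = l
      · simp [hu_def, hjl]
      · have : j ∉ insert l t := by simp [hjl, hj]
        simp [hu_def, hjl, hb j this]
    have heq : b l * X l ^ dd l = ∑ j, u j * X j ^ dd j := by
      have step : ∀ j : Fin n, u j * X j ^ dd j =
          (if j = l then b l * X j ^ dd j else 0) - b j * X j ^ dd j := by
        intro j
        by_cases hjl : j = l
        · subst hjl; simp [hu_def]
        · simp [hu_def, hjl]
      rw [Finset.sum_congr rfl (fun j _ => step j), Finset.sum_sub_distrib,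
        Finset.sum_ite_eq' Finset.univ l (fun j => b l * X j ^ dd j), hsum]
      simp
    obtain ⟨w, hw, hbl⟩ := regular_step t l hl (dd l) dd (b l) u hu heq
    -- new family supported on t
    set b' : Fin n → MvPolynomial (Fin n) k :=
      fun j => if j = l then 0 else b j + w j * X l ^ dd l with hb'_def
    have hb' : ∀ j, j ∉ t → b' j = 0 := by
      intro j hj
      by_cases hjl : j = l
      · simp [hb'_def, hjl]
      · have : j ∉ insert l t := by simp [hjl, hj]
        simp [hb'_def, hjl, hb j this, hw j hj]
    have hsum' : ∑ j, b' j * X j ^ dd j = 0 := by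
      have step : ∀ j : Fin n, b' j * X j ^ dd j =
          (b j * X j ^ dd j + w j * X j ^ dd j * X l ^ dd l) -
            (if j = l then (b l + w l * X l ^ dd l) * X l ^ dd l else 0) := by
        intro j
        by_cases hjl : j = l
        · subst hjl; simp [hb'_def]; ring
        · simp [hb'_def, hjl]; ring
      rw [Finset.sum_congr rfl (fun j _ => step j), Finset.sum_sub_distrib,
        Finset.sum_add_distrib, hsum,
        Finset.sum_ite_eq' Finset.univ l (fun _ => (b l + w l * X l ^ dd l) * X l ^ dd l)]
      rw [hw l hl]
      have : ∑ j, w j * X j ^ dd j * X l ^ dd l = b l * X l ^ dd l := by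
        rw [← Finset.sum_mul, ← hbl]
      rw [this]
      simp
    obtain ⟨c', cdiag, casym, ccol, ceq⟩ := ih b' hb' hsum'
    refine ⟨fun i j => if i = l then w j else if j = l then - w i else c' i j,
      ?_, ?_, ?_, ?_⟩
    · intro i
      by_cases hil : i = l
      · subst hil; simp [hw _ hl]
      · simp [hil, cdiag i]
    · intro i j
      by_cases hil : i = l <;> by_cases hjl : j = l
      · subst hil; subst hjl; simp [hw _ hl]
      · subst hil; simp [hjl]
      · subst hjl; simp [hil]
      · simp [hil, hjl, casym i j]
    · intro i j hj
      have hjl : j ≠ l := by intro h0; subst h0; exact hj (Finset.mem_insert_self _ _)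
      have hjt : j ∉ t := fun h0 => hj (Finset.mem_insert_of_mem h0)
      by_cases hil : i = l
      · simp [hil, hjl, hw j hjt]
      · simp [hil, hjl, ccol i j hjt]
    · intro j
      by_cases hjl : j = l
      · subst hjl
        simp only [if_pos rfl]
        exact hbl
      · have hc'jl : c' j l = 0 := ccol j l hl
        have step : ∀ i : Fin n,
            (if j = l then w i else if i = l then - w j else c' j i) * X i ^ dd i =
              c' j i * X i ^ dd i +
                (if i = l then (- w j - c' j l) * X i ^ dd i else 0) := by
          intro i
          by_cases hil : i = l
          · subst hil; simp [hjl]; ring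
          · simp [hjl, hil]
        rw [Finset.sum_congr rfl (fun i _ => step i), Finset.sum_add_distrib,
          Finset.sum_ite_eq' Finset.univ l (fun i => (- w j - c' j l) * X i ^ dd i),
          ← ceq j, hc'jl]
        simp only [Finset.mem_univ, if_true, hb'_def, if_neg hjl]
        ring


variable {k : Type} [Field k] {n : ℕ}

lemma main_indep (d : Fin n → ℕ) (h : Fin n → MvPolynomial (Fin n) k)
    (hh : ∀ j, (h j).totalDegree < d j) :
    ∀ (D : ℕ) (a : Fin n → MvPolynomial (Fin n) k),
      (∀ j, a j = 0 ∨ (a j).totalDegree + d j ≤ D) →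
      (∀ m ∈ (∑ j, a j * (X j ^ d j + h j)).support, ∀ j, m j < d j) →
      ∑ j, a j * (X j ^ d j + h j) = 0 := by
  classical
  intro D
  induction D with
  | zero =>
    intro a ha _
    apply Finset.sum_eq_zero
    intro j _
    rcases ha j with h0 | h0
    · rw [h0, zero_mul]
    · exfalso; have := hh j; omega
  | succ D ih =>
    intro a ha hstd
    set b : Fin n → MvPolynomial (Fin n) k :=
      fun j => homogeneousComponent (D + 1 - d j) (a j) with hbdef
    have hb0 : ∀ j, D + 1 < d j → a j = 0 := by
      intro j hj
      rcases ha j with h0 | h0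
      · exact h0
      · omega
    -- Step 1 : the top components satisfy the monomial relation
    have hterm : ∀ j : Fin n, homogeneousComponent (D+1) (a j * (X j ^ d j + h j))
        = b j * X j ^ d j := by
      intro j
      rw [mul_add, map_add]
      have h2 : homogeneousComponent (D+1) (a j * h j) = 0 := by
        rcases ha j with h0 | h0
        · rw [h0, zero_mul, map_zero]
        · apply homogeneousComponent_eq_zero
          have := totalDegree_mul (a j) (h j)
          have := hh j
          omega
      have h1 : homogeneousComponent (D+1) (a j * X j ^ d j) = b j * X j ^ d j := by
        rw [hc_mul_pow]
        by_cases hd : d j ≤ D + 1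
        · rw [if_pos hd]
        · rw [if_neg hd]
          have : a j = 0 := hb0 j (by omega)
          simp [hbdef, this]
      rw [h1, h2, add_zero]
    have hG : homogeneousComponent (D+1) (∑ j, a j * (X j ^ d j + h j))
        = ∑ j, b j * X j ^ d j := by
      rw [map_sum]
      exact Finset.sum_congr rfl (fun j _ => hterm j)
    have hbsum : ∑ j, b j * X j ^ d j = 0 := by
      rw [← hG]
      apply MvPolynomial.ext
      intro m
      rw [coeff_zero]
      by_cases hcm : coeff m (homogeneousComponent (D+1) (∑ j, a j * (X j ^ d j + h j))) = 0
      · exact hcm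
      exfalso
      have hmg : m ∈ (∑ j, a j * (X j ^ d j + h j)).support := by
        rw [mem_support_iff]
        intro hc0
        apply hcm
        rw [coeff_homogeneousComponent, hc0]
        simp
      have hstd' := hstd m hmg
      have hz : coeff m (∑ j, b j * X j ^ d j) = 0 := by
        rw [coeff_sum]
        apply Finset.sum_eq_zero
        intro j _
        rw [X_pow_eq_monomial, coeff_mul_monomial']
        rw [if_neg]
        intro hle
        have := Finsupp.single_le_iff.mp hle
        have := hstd' j
        omega
      rw [← hG] at hz
      exact hcm hz
    -- Step 2 : Koszul syzygies
    obtain ⟨c, cdiag, casym, _, ceq⟩ := koszul d Finset.univ b (by simp) hbsum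
    -- Step 3 : truncate the syzygy coefficients
    set c' : Fin n → Fin n → MvPolynomial (Fin n) k := fun i j =>
      if d i + d j ≤ D + 1 then homogeneousComponent (D + 1 - d i - d j) (c i j) else 0
      with hc'def
    have c'diag : ∀ i, c' i i = 0 := by
      intro i
      simp [hc'def, cdiag i]
    have c'asym : ∀ i j, c' i j = - c' j i := by
      intro i j
      simp only [hc'def]
      by_cases hd : d i + d j ≤ D + 1
      · rw [if_pos hd, if_pos (by omega), casym i j, map_neg]
        have harith : D + 1 - d i - d j = D + 1 - d j - d i := by omega
        rw [harith]
      · rw [if_neg hd, if_neg (by omega), neg_zero]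
    have c'eq : ∀ j, b j = ∑ i, c' j i * X i ^ d i := by
      intro j
      by_cases hdj : d j ≤ D + 1
      · have hbj : homogeneousComponent (D + 1 - d j) (b j) = b j := hc_hc _ _
        calc b j = homogeneousComponent (D+1-d j) (b j) := hbj.symm
          _ = homogeneousComponent (D+1-d j) (∑ i, c j i * X i ^ d i) := by rw [← ceq j]
          _ = ∑ i, c' j i * X i ^ d i := by
              rw [map_sum]
              apply Finset.sum_congr rfl
              intro i _
              rw [hc_mul_pow]
              by_cases hdi : d i ≤ D + 1 - d j
              · rw [if_pos hdi]
                simp only [hc'def]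
                rw [if_pos (by omega)]
              · rw [if_neg hdi]
                simp only [hc'def]
                rw [if_neg (by omega), zero_mul]
      · have hbj0 : b j = 0 := by
          simp [hbdef, hb0 j (by omega)]
        rw [hbj0]
        symm
        apply Finset.sum_eq_zero
        intro i _
        simp only [hc'def]
        rw [if_neg (by omega), zero_mul]
    -- Step 4 : the new coefficient family
    set a' : Fin n → MvPolynomial (Fin n) k :=
      fun i => (a i - b i) + ∑ j, c' j i * h j with ha'def
    have hT : ∑ i, ∑ j, c' j i * h j * h i = 0 := by
      rw [← Finset.sum_product' Finset.univ Finset.univ (fun i j => c' j i * h j * h i)]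
      apply Finset.sum_involution (fun p _ => (p.2, p.1))
      · intro p _
        show c' p.2 p.1 * h p.2 * h p.1 + c' p.1 p.2 * h p.1 * h p.2 = 0
        rw [c'asym p.1 p.2]
        ring
      · intro p _ hne
        intro hc
        apply hne
        have h1 : p.2 = p.1 := congrArg Prod.fst hc
        show c' p.2 p.1 * h p.2 * h p.1 = 0
        rw [h1, c'diag p.1, zero_mul, zero_mul]
      · intro p _; exact Finset.mem_univ _
      · intro p _; rfl
    have hrep : ∑ i, a' i * (X i ^ d i + h i) = ∑ j, a j * (X j ^ d j + h j) := by
      have e1 : ∑ i, a' i * (X i ^ d i + h i)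
          = (∑ i, a i * (X i ^ d i + h i)) - (∑ i, b i * (X i ^ d i + h i))
            + ∑ i, (∑ j, c' j i * h j) * (X i ^ d i + h i) := by
        rw [← Finset.sum_sub_distrib, ← Finset.sum_add_distrib]
        apply Finset.sum_congr rfl
        intro i _
        simp only [ha'def]
        ring
      have e2 : ∑ i, b i * (X i ^ d i + h i) = ∑ i, b i * h i := by
        rw [Finset.sum_congr rfl (fun i _ => by rw [mul_add] : ∀ i ∈ Finset.univ,
          b i * (X i ^ d i + h i) = b i * X i ^ d i + b i * h i),
          Finset.sum_add_distrib, hbsum, zero_add]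
      have e3 : ∑ i, (∑ j, c' j i * h j) * (X i ^ d i + h i)
          = (∑ i, (∑ j, c' j i * h j) * X i ^ d i) + ∑ i, ∑ j, c' j i * h j * h i := by
        rw [← Finset.sum_add_distrib]
        apply Finset.sum_congr rfl
        intro i _
        rw [mul_add]
        congr 1
        rw [Finset.sum_mul]
      have e4 : ∑ i, (∑ j, c' j i * h j) * X i ^ d i = ∑ j, b j * h j := by
        rw [Finset.sum_congr rfl (fun j _ => by rw [c'eq j, Finset.sum_mul] : ∀ j ∈ Finset.univ,
          b j * h j = ∑ i, c' j i * X i ^ d i * h j)]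
        rw [Finset.sum_comm]
        apply Finset.sum_congr rfl
        intro i _
        rw [Finset.sum_mul]
        apply Finset.sum_congr rfl
        intro j _
        ring
      rw [e1, e2, e3, e4, hT]
      ring
    -- Step 5 : degree bounds for the new family
    have ha'bound : ∀ i, a' i = 0 ∨ (a' i).totalDegree + d i ≤ D := by
      intro i
      have hsubcase : ∀ (hud : (a i).totalDegree ≤ D + 1 - d i),
          a i - b i = 0 ∨ (a i - b i).totalDegree + 1 ≤ D + 1 - d i := by
        intro hud
        exact sub_top_component (D + 1 - d i) (a i) hud
      by_cases hdi : d i ≤ D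
      · right
        have h1 : (a i - b i).totalDegree ≤ D - d i := by
          rcases ha i with h0 | h0
          · simp [h0, hbdef, totalDegree_zero]
          · rcases hsubcase (by omega) with hz | hz
            · rw [hz, totalDegree_zero]; omega
            · omega
        have h2 : (∑ j, c' j i * h j).totalDegree ≤ D - d i := by
          apply le_trans (totalDegree_finset_sum _ _)
          apply Finset.sup_le
          intro j _
          by_cases hcc : d j + d i ≤ D + 1
          · have hmul := totalDegree_mul (c' j i) (h j)
            have hcd : (c' j i).totalDegree ≤ D + 1 - d j - d i := by
              simp only [hc'def]
              rw [if_pos hcc]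
              exact totalDegree_hc_le _ _
            have := hh j
            omega
          · simp only [hc'def]
            rw [if_neg hcc, zero_mul, totalDegree_zero]
            omega
        have h3 : (a' i).totalDegree ≤ D - d i := by
          simp only [ha'def]
          exact le_trans (totalDegree_add _ _) (max_le h1 h2)
        omega
      · left
        have hdi' : D + 1 ≤ d i := by omega
        have hsub : a i - b i = 0 := by
          rcases ha i with h0 | h0
          · simp [h0, hbdef]
          · rcases hsubcase (by omega) with hz | hz
            · exact hz
            · exfalso; omega
        have hzero2 : ∀ j, c' j i = 0 := by
          intro j
          simp only [hc'def]
          rw [if_neg (by have := hh j; omega)]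
        simp only [ha'def]
        rw [hsub, zero_add]
        apply Finset.sum_eq_zero
        intro j _
        rw [hzero2 j, zero_mul]
    -- conclude by induction
    have hfinal := ih a' ha'bound (by rw [hrep]; exact hstd)
    rw [← hrep]
    exact hfinal


variable {k : Type} [Field k] {n : ℕ}

noncomputable def tE (d : Fin n → ℕ) (e : ∀ j, Fin (d j)) : Fin n →₀ ℕ :=
  Finsupp.equivFunOnFinite.symm fun j => (e j : ℕ)

lemma tE_apply (d : Fin n → ℕ) (e : ∀ j, Fin (d j)) (j : Fin n) : tE d e j = (e j : ℕ) := by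
  simp [tE]

lemma tE_injective (d : Fin n → ℕ) : Function.Injective (tE d) := by
  intro e e' hee
  funext j
  have := congrArg (fun m => m j) hee
  simp only [tE_apply] at this
  exact Fin.ext this

lemma mk_smul (I : Ideal (MvPolynomial (Fin n) k)) (cst : k) (p : MvPolynomial (Fin n) k) :
    Ideal.Quotient.mk I (cst • p) = cst • Ideal.Quotient.mk I p := by
  rw [← Ideal.Quotient.mkₐ_eq_mk k I, map_smul]

lemma std_mem (d : Fin n → ℕ) (h : Fin n → MvPolynomial (Fin n) k)
    (m : Fin n →₀ ℕ) (hm : ∀ j, m j < d j) (cst : k) :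
    Ideal.Quotient.mk (Ideal.span (Set.range fun j => (X j : MvPolynomial (Fin n) k) ^ d j + h j))
        (monomial m cst) ∈
      Submodule.span k (Set.range fun (e : ∀ j, Fin (d j)) =>
        Ideal.Quotient.mk (Ideal.span (Set.range fun j =>
          (X j : MvPolynomial (Fin n) k) ^ d j + h j)) (monomial (tE d e) (1 : k))) := by
  set e : ∀ j, Fin (d j) := fun j => ⟨m j, hm j⟩ with he_def
  have he : tE d e = m := by
    ext j
    rw [tE_apply]
  have hsm : (monomial m cst : MvPolynomial (Fin n) k) = cst • monomial m (1 : k) := by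
    rw [smul_eq_C_mul, C_mul_monomial, mul_one]
  rw [hsm, mk_smul]
  apply Submodule.smul_mem
  apply Submodule.subset_span
  exact ⟨e, by simp only [he]⟩

lemma span_aux (d : Fin n → ℕ) (h : Fin n → MvPolynomial (Fin n) k)
    (hh : ∀ j, (h j).totalDegree < d j) (N : ℕ) :
    ∀ p : MvPolynomial (Fin n) k, p.totalDegree ≤ N →
      Ideal.Quotient.mk (Ideal.span (Set.range fun j =>
          (X j : MvPolynomial (Fin n) k) ^ d j + h j)) p ∈
        Submodule.span k (Set.range fun (e : ∀ j, Fin (d j)) =>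
          Ideal.Quotient.mk (Ideal.span (Set.range fun j =>
            (X j : MvPolynomial (Fin n) k) ^ d j + h j)) (monomial (tE d e) (1 : k))) := by
  classical
  induction N with
  | zero =>
    intro p hp
    rw [← support_sum_monomial_coeff p, map_sum]
    apply Submodule.sum_mem
    intro m hm
    have hd0 : m.degree = 0 := by
      have := degree_le_totalDegree hm
      omega
    have hm0 : m = 0 := (Finsupp.degree_eq_zero_iff m).mp hd0
    apply std_mem
    intro j
    rw [hm0]
    have := hh j
    simp
    omega
  | succ N ih =>
    intro p hp
    rw [← support_sum_monomial_coeff p, map_sum]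
    apply Submodule.sum_mem
    intro m hm
    by_cases hstd : ∀ j, m j < d j
    · exact std_mem d h m hstd _
    · push_neg at hstd
      obtain ⟨j, hj⟩ := hstd
      have hc : coeff m p ≠ 0 := mem_support_iff.mp hm
      have hle : Finsupp.single j (d j) ≤ m := Finsupp.single_le_iff.mpr hj
      have key : (monomial m (coeff m p) : MvPolynomial (Fin n) k)
          = monomial (m - Finsupp.single j (d j)) (coeff m p) * X j ^ d j := by
        rw [X_pow_eq_monomial, monomial_mul, mul_one, tsub_add_cancel_of_le hle]
      have key2 : (monomial m (coeff m p) : MvPolynomial (Fin n) k)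
          = monomial (m - Finsupp.single j (d j)) (coeff m p) * (X j ^ d j + h j)
            - monomial (m - Finsupp.single j (d j)) (coeff m p) * h j := by
        rw [key]; ring
      rw [key2, RingHom.map_sub]
      have hmem : Ideal.Quotient.mk (Ideal.span (Set.range fun j =>
          (X j : MvPolynomial (Fin n) k) ^ d j + h j))
          (monomial (m - Finsupp.single j (d j)) (coeff m p) * (X j ^ d j + h j)) = 0 := by
        rw [Ideal.Quotient.eq_zero_iff_mem]
        exact Ideal.mul_mem_left _ _ (Ideal.subset_span ⟨j, rfl⟩)
      rw [hmem, zero_sub]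
      apply Submodule.neg_mem
      apply ih
      have hdm : m.degree ≤ N + 1 := le_trans (degree_le_totalDegree hm) hp
      have hjd : d j ≤ m.degree := le_trans hj (Finsupp.le_degree j m)
      have hdm' : (m - Finsupp.single j (d j)).degree = m.degree - d j := by
        rw [degree_tsub hle, degree_single]
      have hmono : (monomial (m - Finsupp.single j (d j)) (coeff m p)).totalDegree
          = (m - Finsupp.single j (d j)).degree := totalDegree_monomial _ hc
      have hmul := totalDegree_mul (monomial (m - Finsupp.single j (d j)) (coeff m p)) (h j)
      have := hh j
      omega


end QFLPAux

/-- If `I = (f₁, …, f_n) ⊆ k[x₁, …, x_n]` where `f_j = x_j^{d_j} + h_j` with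
`totalDegree h_j < d_j`, then `k[x₁, …, x_n]/I` is a finite-dimensional `k`-vector
space of dimension exactly `d₁ ⋯ d_n`. -/
theorem quotient_finrank_of_leading_powers (k : Type) [Field k] (n : ℕ)
    (d : Fin n → ℕ) (h : Fin n → MvPolynomial (Fin n) k)
    (hh : ∀ j, (h j).totalDegree < d j) :
    Module.Finite k
        (MvPolynomial (Fin n) k ⧸
          Ideal.span (Set.range fun j => (X j : MvPolynomial (Fin n) k) ^ d j + h j)) ∧
    Module.finrank k
        (MvPolynomial (Fin n) k ⧸
          Ideal.span (Set.range fun j => (X j : MvPolynomial (Fin n) k) ^ d j + h j)) =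
      ∏ j, d j := by
  classical
  set I : Ideal (MvPolynomial (Fin n) k) :=
    Ideal.span (Set.range fun j => (X j : MvPolynomial (Fin n) k) ^ d j + h j) with hI
  set v : (∀ j, Fin (d j)) → (MvPolynomial (Fin n) k ⧸ I) :=
    fun e => Ideal.Quotient.mk I (monomial (QFLPAux.tE d e) (1 : k)) with hv
  -- spanning
  have hspan : ⊤ ≤ Submodule.span k (Set.range v) := by
    intro q _
    obtain ⟨p, rfl⟩ := Ideal.Quotient.mk_surjective q
    exact QFLPAux.span_aux d h hh p.totalDegree p le_rfl
  -- linear independence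
  have hind : LinearIndependent k v := by
    rw [Fintype.linearIndependent_iff]
    intro g hg e
    set P : MvPolynomial (Fin n) k := ∑ e', monomial (QFLPAux.tE d e') (g e') with hP
    have hmk : Ideal.Quotient.mk I P = 0 := by
      rw [hP, map_sum, ← hg]
      apply Finset.sum_congr rfl
      intro e' _
      have : (monomial (QFLPAux.tE d e') (g e') : MvPolynomial (Fin n) k)
          = g e' • monomial (QFLPAux.tE d e') (1 : k) := by
        rw [smul_eq_C_mul, C_mul_monomial, mul_one]
      rw [this, QFLPAux.mk_smul]
    have hPI : P ∈ I := Ideal.Quotient.eq_zero_iff_mem.mp hmk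
    rw [hI] at hPI
    obtain ⟨c, hc⟩ := (Submodule.mem_span_range_iff_exists_fun (MvPolynomial (Fin n) k)).mp hPI
    simp only [smul_eq_mul] at hc
    have hstd : ∀ m ∈ (∑ j, c j * ((X j : MvPolynomial (Fin n) k) ^ d j + h j)).support,
        ∀ j, m j < d j := by
      rw [hc]
      intro m hm j
      have := MvPolynomial.support_sum hm
      rw [Finset.mem_biUnion] at this
      obtain ⟨e', _, hme⟩ := this
      have hsub := MvPolynomial.support_monomial (s := QFLPAux.tE d e') (a := g e')
      rw [hsub] at hme
      split_ifs at hme with h0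
      · simp at hme
      · rw [Finset.mem_singleton] at hme
        rw [hme, QFLPAux.tE_apply]
        exact (e' j).isLt
    have hzero : ∑ j, c j * ((X j : MvPolynomial (Fin n) k) ^ d j + h j) = 0 := by
      apply QFLPAux.main_indep d h hh (Finset.univ.sup fun j => (c j).totalDegree + d j)
      · intro j
        exact Or.inr (Finset.le_sup (f := fun j => (c j).totalDegree + d j) (Finset.mem_univ j))
      · exact hstd
    have hP0 : P = 0 := by rw [← hc]; exact hzero
    have : coeff (QFLPAux.tE d e) P = 0 := by rw [hP0]; exact coeff_zero _
    rw [hP, coeff_sum] at this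
    rw [← this]
    symm
    rw [Finset.sum_eq_single_of_mem e (Finset.mem_univ e)]
    · rw [coeff_monomial, if_pos rfl]
    · intro e' _ hne
      rw [coeff_monomial, if_neg]
      intro heq
      exact hne (QFLPAux.tE_injective d heq)
  -- assemble
  have B : Module.Basis (∀ j, Fin (d j)) k (MvPolynomial (Fin n) k ⧸ I) := Module.Basis.mk hind hspan
  refine ⟨Module.Finite.of_basis B, ?_⟩
  rw [Module.finrank_eq_card_basis B, Fintype.card_pi]
  simp
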